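/- arXiv:math/0303073 — 2 statements merged into one kernel-verified Lean document; each statement's English description precedes it below -/
import Mathlib

section
/- For every p ∈ ℝ³ and every unit vector n ∈ S², the vectors F₀(p) = (1, p¹/√2, p², p³, -p¹/√2, (p·p)/2) and F₁(p,n) = (0, (1+n¹)/2, n²/√2, n³/√2, (1-n¹)/2, (n·p)/√2) span a 2-dimensional totally isotropic subspace of ℝ^{(4,2)}: both vectors are isotropic, they are orthogonal to each other, and they are linearly independent. -/
/-- The bilinear form `⟨V,W⟩ = -v⁰w⁵ - v⁵w⁰ - v¹w⁴ - v⁴w¹ + v²w² + v³w³` on `ℝ⁶`. -/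
noncomputable def lieForm (v w : Fin 6 → ℝ) : ℝ :=
  -(v 0 * w 5) - v 5 * w 0 - v 1 * w 4 - v 4 * w 1 + v 2 * w 2 + v 3 * w 3

/-- Euclidean dot product on `ℝ³`. -/
noncomputable def dot3 (p q : Fin 3 → ℝ) : ℝ := p 0 * q 0 + p 1 * q 1 + p 2 * q 2

/-- `F₀(p) = (1, p¹/√2, p², p³, -p¹/√2, (p·p)/2)`. -/
noncomputable def F0 (p : Fin 3 → ℝ) : Fin 6 → ℝ :=
  ![1, p 0 / Real.sqrt 2, p 1, p 2, -(p 0) / Real.sqrt 2, dot3 p p / 2]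

/-- `F₁(p,n) = (0, (1+n¹)/2, n²/√2, n³/√2, (1-n¹)/2, (n·p)/√2)`. -/
noncomputable def F1 (p n : Fin 3 → ℝ) : Fin 6 → ℝ :=
  ![0, (1 + n 0) / 2, n 1 / Real.sqrt 2, n 2 / Real.sqrt 2, (1 - n 0) / 2,
    dot3 n p / Real.sqrt 2]

lemma vec6_two (a b c d e f : ℝ) : ![a,b,c,d,e,f] 2 = c := rfl
lemma vec6_three (a b c d e f : ℝ) : ![a,b,c,d,e,f] 3 = d := rfl
lemma vec6_four (a b c d e f : ℝ) : ![a,b,c,d,e,f] 4 = e := rfl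
lemma vec6_five (a b c d e f : ℝ) : ![a,b,c,d,e,f] 5 = f := rfl

/-- For every `p ∈ ℝ³` and unit vector `n`, the vectors `F₀(p)` and `F₁(p,n)` span a
2-dimensional totally isotropic subspace: both are isotropic, they are orthogonal to
each other, and they are linearly independent. -/
theorem F0_F1_span_null_plane (p n : Fin 3 → ℝ) (hn : dot3 n n = 1) :
    lieForm (F0 p) (F0 p) = 0 ∧
    lieForm (F1 p n) (F1 p n) = 0 ∧
    lieForm (F0 p) (F1 p n) = 0 ∧
    LinearIndependent ℝ ![F0 p, F1 p n] := by
  have h2 : Real.sqrt 2 * Real.sqrt 2 = 2 := Real.mul_self_sqrt (by norm_num)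
  have h2' : Real.sqrt 2 ≠ 0 := by positivity
  refine ⟨?_, ?_, ?_, ?_⟩
  · simp only [lieForm, F0, dot3, Matrix.cons_val_zero, Matrix.cons_val_one, Matrix.head_cons,
      Matrix.cons_val_fin_one, vec6_two, vec6_three, vec6_four, vec6_five]
    field_simp
    linear_combination (-2 * p 0 ^ 2) * h2
  · simp only [lieForm, F1, dot3, Matrix.cons_val_zero, Matrix.cons_val_one, Matrix.head_cons,
      Matrix.cons_val_fin_one, vec6_two, vec6_three, vec6_four, vec6_five]
    simp only [dot3] at hn
    field_simp
    nlinarith [hn]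
  · simp only [lieForm, F0, F1, dot3, Matrix.cons_val_zero, Matrix.cons_val_one, Matrix.head_cons,
      Matrix.cons_val_fin_one, vec6_two, vec6_three, vec6_four, vec6_five]
    field_simp
    ring
  · rw [LinearIndependent.pair_iff]
    intro s t hst
    have h0 := congrFun hst 0
    have h1 := congrFun hst 1
    have h4 := congrFun hst 4
    simp only [F0, F1, Pi.add_apply, Pi.smul_apply, smul_eq_mul, Matrix.cons_val_zero,
      Matrix.cons_val_one, Matrix.head_cons, vec6_four, vec6_five, Pi.zero_apply] at h0 h1 h4
    have hs : s = 0 := by linarith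
    subst hs
    exact ⟨rfl, by linarith⟩
end

section
/- The map F sending (p,n) ∈ ℝ³ × S² to the plane spanned by F₀(p) and F₁(p,n) in ℝ^{(4,2)} is injective: if span{F₀(p),F₁(p,n)} = span{F₀(q),F₁(q,m)} then p = q and n = m. -/
/-- The map `F : ℝ³ × S² → 𝒦`, `(p,n) ↦ span{F₀(p), F₁(p,n)}`, is injective. -/
theorem F_injective (p q n m : Fin 3 → ℝ) (hn : dot3 n n = 1) (hm : dot3 m m = 1)
    (h : Submodule.span ℝ {F0 p, F1 p n} = Submodule.span ℝ {F0 q, F1 q m}) :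
    p = q ∧ n = m := by
  have hs2 : Real.sqrt 2 ≠ 0 := by positivity
  have h0 : F0 q ∈ Submodule.span ℝ {F0 p, F1 p n} := by
    rw [h]; exact Submodule.subset_span (by simp)
  have h1 : F1 q m ∈ Submodule.span ℝ {F0 p, F1 p n} := by
    rw [h]; exact Submodule.subset_span (by simp)
  rw [Submodule.mem_span_pair] at h0 h1
  obtain ⟨a, b, hab⟩ := h0
  obtain ⟨c, d, hcd⟩ := h1
  have e0 := congrFun hab 0
  have e1 := congrFun hab 1
  have e2 := congrFun hab 2
  have e3 := congrFun hab 3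
  have e4 := congrFun hab 4
  have f0 := congrFun hcd 0
  have f1 := congrFun hcd 1
  have f2 := congrFun hcd 2
  have f3 := congrFun hcd 3
  have f4 := congrFun hcd 4
  simp only [F0, F1, Pi.add_apply, Pi.smul_apply, smul_eq_mul, Matrix.cons_val_zero,
    Matrix.cons_val_one, Matrix.head_cons, Matrix.cons_val_two, Matrix.cons_val_three,
    Matrix.cons_val_four, Matrix.tail_cons, Fin.isValue] at e0 e1 e2 e3 e4 f0 f1 f2 f3 f4
  -- from e0 : a = 1 ; e1 + e4 : b = 0
  have ha : a = 1 := by linarith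
  have hb : b = 0 := by linear_combination e1 + e4
  subst ha; subst hb
  have hc : c = 0 := by linarith
  have hd : d = 1 := by linear_combination f1 + f4
  subst hc; subst hd
  have hp0 : p 0 = q 0 := by
    field_simp at e1; linarith
  have hp : p = q := by
    funext i; fin_cases i
    · exact hp0
    · simpa using e2
    · simpa using e3
  have hn0 : n 0 = m 0 := by linear_combination 2 * f1
  have hn1 : n 1 = m 1 := by field_simp at f2; linarith
  have hn2 : n 2 = m 2 := by field_simp at f3; linarith
  have hnm : n = m := by
    funext i; fin_cases i
    · exact hn0
    · exact hn1
    · exact hn2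
  exact ⟨hp, hnm⟩
end
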